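/- Let (X,μ) be a probability measure space and (Y,d) a Hadamard (complete CAT(0)) space. For an essentially bounded measurable map f: X → Y let c_f denote the center of mass of the pushforward measure f_*μ, i.e., the unique minimizer of x ↦ ∫_Y d(x,y)² d(f_*μ)(y). Then for any two essentially bounded measurable maps f, g: X → Y, d(c_f, c_g) ≤ ∫_X d(f(x), g(x)) dμ(x). -/

import Mathlib

open MeasureTheory

section quad
variable {Y : Type*} [MetricSpace Y]

/-- Parallelogram-type inequality in CAT(0): `2⟨ab,cd⟩ ≤ d(a,b)² + d(c,d)²`. -/
lemma quad_key (geo : Y → Y → ℝ → Y)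
    (hcat : ∀ p a b : Y, ∀ t ∈ Set.Icc (0:ℝ) 1,
      dist p (geo a b t) ^ 2 ≤ (1 - t) * dist p a ^ 2 + t * dist p b ^ 2
        - t * (1 - t) * dist a b ^ 2)
    (a b c d : Y) :
    dist a d ^ 2 + dist b c ^ 2 - dist a c ^ 2 - dist b d ^ 2 ≤
      dist a b ^ 2 + dist c d ^ 2 := by
  have hmem : (1/2 : ℝ) ∈ Set.Icc (0:ℝ) 1 := by norm_num
  have h1 := hcat b a d (1/2) hmem
  have h2 := hcat c a d (1/2) hmem
  have h3 := hcat (geo a d (1/2)) b c (1/2) hmem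
  have h0 : (0:ℝ) ≤ dist (geo a d (1/2)) (geo b c (1/2)) ^ 2 := sq_nonneg _
  rw [dist_comm b a] at h1
  rw [dist_comm c a] at h2
  rw [dist_comm (geo a d (1/2)) b, dist_comm (geo a d (1/2)) c] at h3
  linarith

/-- Berg–Nikolaev quadruple (Cauchy–Schwarz) inequality in CAT(0). -/
lemma quad_cs (geo : Y → Y → ℝ → Y)
    (hgeo0 : ∀ a b, geo a b 0 = a)
    (hgeo1 : ∀ a b, geo a b 1 = b)
    (hgeodist : ∀ a b : Y, ∀ s ∈ Set.Icc (0:ℝ) 1, ∀ t ∈ Set.Icc (0:ℝ) 1,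
      dist (geo a b s) (geo a b t) = |s - t| * dist a b)
    (hcat : ∀ p a b : Y, ∀ t ∈ Set.Icc (0:ℝ) 1,
      dist p (geo a b t) ^ 2 ≤ (1 - t) * dist p a ^ 2 + t * dist p b ^ 2
        - t * (1 - t) * dist a b ^ 2)
    (a b c d : Y) :
    dist a d ^ 2 + dist b c ^ 2 - dist a c ^ 2 - dist b d ^ 2 ≤
      2 * dist a b * dist c d := by
  -- distance between consecutive subdivision points
  have hsub : ∀ (p q : Y) (n : ℕ), 0 < n → ∀ i : ℕ, i < n →
      dist (geo p q (i / n)) (geo p q ((i+1) / n)) = dist p q / n := by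
    intro p q n hn i hi
    have hn' : (0:ℝ) < n := by exact_mod_cast hn
    have m1 : (i / n : ℝ) ∈ Set.Icc (0:ℝ) 1 := by
      constructor
      · positivity
      · rw [div_le_one hn']; exact_mod_cast hi.le
    have m2 : ((i+1) / n : ℝ) ∈ Set.Icc (0:ℝ) 1 := by
      constructor
      · positivity
      · rw [div_le_one hn']; exact_mod_cast hi
    rw [hgeodist p q _ m1 _ m2]
    have : |(i / n : ℝ) - (i+1) / n| = 1 / n := by
      rw [div_sub_div_same, abs_div, abs_of_pos hn']
      norm_num
    rw [this]; ring
  -- single subdivision of the first segment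
  have lemB : ∀ (n : ℕ), 0 < n → ∀ u v : Y,
      dist a v ^ 2 + dist b u ^ 2 - dist a u ^ 2 - dist b v ^ 2 ≤
        dist a b ^ 2 / n + n * dist u v ^ 2 := by
    intro n hn u v
    have hn' : (0:ℝ) < n := by exact_mod_cast hn
    set H : Y → ℝ := fun y => dist y u ^ 2 - dist y v ^ 2 with hH
    have tele : ∑ i ∈ Finset.range n,
        (H (geo a b (((i:ℝ)+1) / n)) - H (geo a b ((i:ℝ) / n))) = H b - H a := by
      have t := Finset.sum_range_sub (fun i : ℕ => H (geo a b ((i:ℝ) / n))) n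
      push_cast at t
      rw [div_self (ne_of_gt hn'), zero_div, hgeo0, hgeo1] at t
      exact t
    have bound : ∀ i ∈ Finset.range n,
        H (geo a b (((i:ℝ)+1) / n)) - H (geo a b ((i:ℝ) / n)) ≤
          dist a b ^ 2 / n ^ 2 + dist u v ^ 2 := by
      intro i hi
      have hi' := Finset.mem_range.mp hi
      have hk := quad_key geo hcat (geo a b ((i:ℝ) / n)) (geo a b (((i:ℝ)+1) / n)) u v
      have hd := hsub a b n hn i hi'
      rw [hd] at hk
      have he : (dist a b / n) ^ 2 = dist a b ^ 2 / n ^ 2 := by ring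
      rw [he] at hk
      simp only [hH]
      linarith
    have hs := Finset.sum_le_sum bound
    rw [tele, Finset.sum_const, Finset.card_range, nsmul_eq_mul] at hs
    have expand : H b - H a =
        dist a v ^ 2 + dist b u ^ 2 - dist a u ^ 2 - dist b v ^ 2 := by
      simp only [hH]; ring
    rw [expand] at hs
    calc dist a v ^ 2 + dist b u ^ 2 - dist a u ^ 2 - dist b v ^ 2
        ≤ n * (dist a b ^ 2 / n ^ 2 + dist u v ^ 2) := hs
      _ = dist a b ^ 2 / n + n * dist u v ^ 2 := by field_simp
  -- subdivision of the second segment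
  have lemA : ∀ (n k : ℕ), 0 < n → 0 < k →
      dist a d ^ 2 + dist b c ^ 2 - dist a c ^ 2 - dist b d ^ 2 ≤
        k * dist a b ^ 2 / n + n * dist c d ^ 2 / k := by
    intro n k hn hk
    have hk' : (0:ℝ) < k := by exact_mod_cast hk
    set G : Y → ℝ := fun y => dist a y ^ 2 - dist b y ^ 2 with hG
    have tele : ∑ j ∈ Finset.range k,
        (G (geo c d (((j:ℝ)+1) / k)) - G (geo c d ((j:ℝ) / k))) = G d - G c := by
      have t := Finset.sum_range_sub (fun j : ℕ => G (geo c d ((j:ℝ) / k))) k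
      push_cast at t
      rw [div_self (ne_of_gt hk'), zero_div, hgeo0, hgeo1] at t
      exact t
    have bound : ∀ j ∈ Finset.range k,
        G (geo c d (((j:ℝ)+1) / k)) - G (geo c d ((j:ℝ) / k)) ≤
          dist a b ^ 2 / n + n * (dist c d ^ 2 / k ^ 2) := by
      intro j hj
      have hj' := Finset.mem_range.mp hj
      have hb := lemB n hn (geo c d ((j:ℝ) / k)) (geo c d (((j:ℝ)+1) / k))
      have hd := hsub c d k hk j hj'
      rw [hd] at hb
      have he : (dist c d / k) ^ 2 = dist c d ^ 2 / k ^ 2 := by ring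
      rw [he] at hb
      simp only [hG]
      linarith
    have hs := Finset.sum_le_sum bound
    rw [tele, Finset.sum_const, Finset.card_range, nsmul_eq_mul] at hs
    have expand : G d - G c =
        dist a d ^ 2 + dist b c ^ 2 - dist a c ^ 2 - dist b d ^ 2 := by
      simp only [hG]; ring
    rw [expand] at hs
    calc dist a d ^ 2 + dist b c ^ 2 - dist a c ^ 2 - dist b d ^ 2
        ≤ k * (dist a b ^ 2 / n + n * (dist c d ^ 2 / k ^ 2)) := hs
      _ = k * dist a b ^ 2 / n + n * dist c d ^ 2 / k := by field_simp
  -- conclude by optimizing over n, k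
  rcases eq_or_lt_of_le (dist_nonneg : (0:ℝ) ≤ dist a b) with hP0 | hP0
  · have hab : a = b := dist_eq_zero.mp hP0.symm
    subst hab
    have h1 : (0:ℝ) ≤ dist c d := dist_nonneg
    nlinarith
  rcases eq_or_lt_of_le (dist_nonneg : (0:ℝ) ≤ dist c d) with hL0 | hL0
  · have hcd : c = d := dist_eq_zero.mp hL0.symm
    subst hcd
    nlinarith
  apply le_of_forall_pos_le_add
  intro ε hε
  obtain ⟨n, hn⟩ := exists_nat_gt (max 1 (dist a b ^ 2 / ε))
  have hn1 : (1:ℝ) < n := lt_of_le_of_lt (le_max_left _ _) hn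
  have hnpos : 0 < n := by exact_mod_cast lt_trans one_pos hn1
  have hn' : (0:ℝ) < n := by exact_mod_cast hnpos
  set k : ℕ := ⌈(n * dist c d / dist a b : ℝ)⌉₊ with hk
  have hx : (0:ℝ) < n * dist c d / dist a b := by positivity
  have hkpos : 0 < k := Nat.ceil_pos.mpr hx
  have hk' : (0:ℝ) < k := by exact_mod_cast hkpos
  have hkge : (n * dist c d / dist a b : ℝ) ≤ k := Nat.le_ceil _
  have hkle : (k:ℝ) ≤ n * dist c d / dist a b + 1 := (Nat.ceil_lt_add_one hx.le).le
  have key := lemA n k hnpos hkpos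
  have b1 : (k:ℝ) * dist a b ^ 2 / n ≤ dist a b * dist c d + dist a b ^ 2 / n := by
    calc (k:ℝ) * dist a b ^ 2 / n
        ≤ (n * dist c d / dist a b + 1) * dist a b ^ 2 / n := by gcongr
      _ = dist a b * dist c d + dist a b ^ 2 / n := by field_simp
  have b2 : (n:ℝ) * dist c d ^ 2 / k ≤ dist a b * dist c d := by
    rw [div_le_iff₀ hk']
    calc (n:ℝ) * dist c d ^ 2
        = (n * dist c d / dist a b) * (dist c d * dist a b) := by field_simp
      _ ≤ k * (dist c d * dist a b) := by
          apply mul_le_mul_of_nonneg_right hkge; positivity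
      _ = dist a b * dist c d * k := by ring
  have b3 : dist a b ^ 2 / n ≤ ε := by
    rw [div_le_iff₀ hn']
    have h5 : dist a b ^ 2 / ε < n := lt_of_le_of_lt (le_max_right _ _) hn
    have h6 : dist a b ^ 2 < n * ε := by
      rw [div_lt_iff₀ hε] at h5; linarith
    linarith
  linarith
end quad


/-- Variance inequality for a minimizer of `z ↦ ∫ d(z, h x)² dμ` in CAT(0). -/
lemma variance_ineq {X Y : Type*} [MeasurableSpace X] [MetricSpace Y]
    (geo : Y → Y → ℝ → Y)
    (hcat : ∀ p a b : Y, ∀ t ∈ Set.Icc (0:ℝ) 1,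
      dist p (geo a b t) ^ 2 ≤ (1 - t) * dist p a ^ 2 + t * dist p b ^ 2
        - t * (1 - t) * dist a b ^ 2)
    (μ : Measure X) [IsProbabilityMeasure μ]
    (h : X → Y) (c z : Y)
    (hint : ∀ w : Y, Integrable (fun x => dist w (h x) ^ 2) μ)
    (hc : ∀ w : Y, (∫ x, dist c (h x) ^ 2 ∂μ) ≤ ∫ x, dist w (h x) ^ 2 ∂μ) :
    dist c z ^ 2 + ∫ x, dist c (h x) ^ 2 ∂μ ≤ ∫ x, dist z (h x) ^ 2 ∂μ := by
  have step : ∀ t : ℝ, 0 < t → t ≤ 1 →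
      (1 - t) * dist c z ^ 2 + (∫ x, dist c (h x) ^ 2 ∂μ) ≤ ∫ x, dist z (h x) ^ 2 ∂μ := by
    intro t ht0 ht1
    have hmem : t ∈ Set.Icc (0:ℝ) 1 := ⟨ht0.le, ht1⟩
    have hpt : ∀ x, dist (geo c z t) (h x) ^ 2 ≤
        (1 - t) * dist c (h x) ^ 2 + t * dist z (h x) ^ 2 - t * (1 - t) * dist c z ^ 2 := by
      intro x
      have hc2 := hcat (h x) c z t hmem
      rw [dist_comm (h x) c, dist_comm (h x) z, dist_comm (h x) (geo c z t)] at hc2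
      exact hc2
    have intc := hint c
    have intz := hint z
    have intA : Integrable (fun x => (1 - t) * dist c (h x) ^ 2 + t * dist z (h x) ^ 2) μ :=
      (intc.const_mul (1 - t)).add (intz.const_mul t)
    have int2 : Integrable (fun x => (1 - t) * dist c (h x) ^ 2 + t * dist z (h x) ^ 2
        - t * (1 - t) * dist c z ^ 2) μ := intA.sub (integrable_const _)
    have hmono := integral_mono (hint (geo c z t)) int2 hpt
    rw [integral_sub intA (integrable_const _),
        integral_add (intc.const_mul (1 - t)) (intz.const_mul t),
        integral_const_mul, integral_const_mul, integral_const] at hmono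
    simp only [measure_univ, ENNReal.toReal_one, probReal_univ, one_smul] at hmono
    have h4 := hc (geo c z t)
    have key : t * ((1 - t) * dist c z ^ 2 + ∫ x, dist c (h x) ^ 2 ∂μ) ≤
        t * ∫ x, dist z (h x) ^ 2 ∂μ := by nlinarith
    exact le_of_mul_le_mul_left key ht0
  apply le_of_forall_pos_le_add
  intro ε hε
  set D := dist c z with hD
  set t := min 1 (ε / (D ^ 2 + 1)) with ht
  have ht0 : 0 < t := lt_min one_pos (by positivity)
  have ht1 : t ≤ 1 := min_le_left _ _
  have hstep := step t ht0 ht1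
  have htD : t * D ^ 2 ≤ ε := by
    have h1 : t ≤ ε / (D ^ 2 + 1) := min_le_right _ _
    calc t * D ^ 2 ≤ (ε / (D ^ 2 + 1)) * D ^ 2 :=
          mul_le_mul_of_nonneg_right h1 (sq_nonneg _)
      _ ≤ ε := by
          rw [div_mul_eq_mul_div, div_le_iff₀ (by positivity)]
          nlinarith [sq_nonneg D]
  linarith


/-- Contractivity of the center of mass in a Hadamard (complete CAT(0)) space:
if `cf` and `cg` are the barycenters of the pushforward measures `f_*μ` and `g_*μ`
(i.e. the minimizers of `x ↦ ∫ d(x, f ω)² dμ(ω)` resp. for `g`), then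
`d(cf, cg) ≤ ∫ d(f ω, g ω) dμ(ω)`. -/
theorem center_of_mass_contractive {X Y : Type*} [MeasurableSpace X]
    [MetricSpace Y] [CompleteSpace Y] [MeasurableSpace Y] [OpensMeasurableSpace Y]
    (geo : Y → Y → ℝ → Y)
    (hgeo0 : ∀ a b, geo a b 0 = a)
    (hgeo1 : ∀ a b, geo a b 1 = b)
    (hgeodist : ∀ a b : Y, ∀ s ∈ Set.Icc (0:ℝ) 1, ∀ t ∈ Set.Icc (0:ℝ) 1,
      dist (geo a b s) (geo a b t) = |s - t| * dist a b)
    (hcat : ∀ p a b : Y, ∀ t ∈ Set.Icc (0:ℝ) 1,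
      dist p (geo a b t) ^ 2 ≤ (1 - t) * dist p a ^ 2 + t * dist p b ^ 2
        - t * (1 - t) * dist a b ^ 2)
    (μ : Measure X) [IsProbabilityMeasure μ]
    (f g : X → Y)
    (hf : AEStronglyMeasurable f μ) (hg : AEStronglyMeasurable g μ)
    (hfb : Bornology.IsBounded (Set.range f)) (hgb : Bornology.IsBounded (Set.range g))
    (cf cg : Y)
    (hcf : ∀ z : Y, (∫ x, dist cf (f x) ^ 2 ∂μ) ≤ ∫ x, dist z (f x) ^ 2 ∂μ)
    (hcg : ∀ z : Y, (∫ x, dist cg (g x) ^ 2 ∂μ) ≤ ∫ x, dist z (g x) ^ 2 ∂μ) :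
    dist cf cg ≤ ∫ x, dist (f x) (g x) ∂μ := by
  -- integrability of the squared distance functions
  have intsq : ∀ (h : X → Y), AEStronglyMeasurable h μ → Bornology.IsBounded (Set.range h) →
      ∀ z : Y, Integrable (fun x => dist z (h x) ^ 2) μ := by
    intro h hm hb z
    obtain ⟨R, hR⟩ := hb.subset_closedBall z
    have hm2 : AEStronglyMeasurable (fun x => dist z (h x) ^ 2) μ :=
      (aestronglyMeasurable_const.dist hm).pow 2
    refine Integrable.mono' (integrable_const (R ^ 2)) hm2 ?_
    filter_upwards with x
    rw [Real.norm_eq_abs, abs_of_nonneg (sq_nonneg _)]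
    have hx : h x ∈ Metric.closedBall z R := hR (Set.mem_range_self x)
    rw [Metric.mem_closedBall] at hx
    have h1 : dist z (h x) ≤ R := by rw [dist_comm]; exact hx
    nlinarith [dist_nonneg (x := z) (y := h x)]
  have int2f := intsq f hf hfb
  have int2g := intsq g hg hgb
  have intfg : Integrable (fun x => dist (f x) (g x)) μ := by
    obtain ⟨R, hR⟩ := hfb.subset_closedBall cf
    obtain ⟨S, hS⟩ := hgb.subset_closedBall cf
    refine Integrable.mono' (integrable_const (R + S)) (hf.dist hg) ?_
    filter_upwards with x
    rw [Real.norm_eq_abs, abs_of_nonneg dist_nonneg]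
    have h1 : dist (f x) cf ≤ R := hR (Set.mem_range_self x)
    have h2 : dist (g x) cf ≤ S := hS (Set.mem_range_self x)
    calc dist (f x) (g x) ≤ dist (f x) cf + dist cf (g x) := dist_triangle _ _ _
      _ ≤ R + S := by rw [dist_comm cf (g x)]; exact add_le_add h1 h2
  -- variance inequalities
  have v1 := variance_ineq geo hcat μ f cf cg int2f hcf
  have v2 := variance_ineq geo hcat μ g cg cf int2g hcg
  rw [dist_comm cg cf] at v2
  -- pointwise quadruple inequality, integrated
  have hq : ∀ x, dist cf (g x) ^ 2 + dist cg (f x) ^ 2 - dist cf (f x) ^ 2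
      - dist cg (g x) ^ 2 ≤ 2 * dist cf cg * dist (f x) (g x) :=
    fun x => quad_cs geo hgeo0 hgeo1 hgeodist hcat cf cg (f x) (g x)
  have intA : Integrable (fun x => dist cf (g x) ^ 2 + dist cg (f x) ^ 2) μ :=
    (int2g cf).add (int2f cg)
  have intB : Integrable (fun x => dist cf (g x) ^ 2 + dist cg (f x) ^ 2
      - dist cf (f x) ^ 2) μ := intA.sub (int2f cf)
  have intL : Integrable (fun x => dist cf (g x) ^ 2 + dist cg (f x) ^ 2
      - dist cf (f x) ^ 2 - dist cg (g x) ^ 2) μ := intB.sub (int2g cg)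
  have intR : Integrable (fun x => 2 * dist cf cg * dist (f x) (g x)) μ :=
    intfg.const_mul _
  have hint := integral_mono intL intR hq
  rw [integral_sub intB (int2g cg), integral_sub intA (int2f cf),
      integral_add (int2g cf) (int2f cg), integral_const_mul] at hint
  -- conclude
  rcases eq_or_lt_of_le (dist_nonneg : (0:ℝ) ≤ dist cf cg) with h0 | h0
  · rw [← h0]
    exact integral_nonneg fun x => dist_nonneg
  · nlinarith [v1, v2, hint, h0]
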